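/- Successive entries in the shortest Ziggu change sequence S(n) differ by at most one ('stair-climbing property'): for any two adjacent entries a, b in S(n), |a - b| ≤ 1. -/

import Mathlib

theorem shortest_ziggu_stair_climbing (S C : ℕ → List ℕ)
    (hS1 : S 1 = [1, 1, 1]) (hC1 : C 1 = [1, 1, 1])
    (hCrec : ∀ n, 2 ≤ n → C n = [n] ++ C (n - 1) ++ [n] ++ C (n - 1) ++ [n])
    (hSrec : ∀ n, 2 ≤ n → S n = S (n - 1) ++ C n) :
    ∀ n, 1 ≤ n → List.Chain' (fun a b => |(a : ℤ) - (b : ℤ)| ≤ 1) (S n) := by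
  set P : ℕ → ℕ → Prop := fun a b => |(a : ℤ) - (b : ℤ)| ≤ 1 with hP
  have hadj : ∀ n : ℕ, P n (n + 1) ∧ P (n + 1) n := by
    intro n
    constructor <;> · simp only [hP, abs_sub_le_iff]; push_cast; omega
  have hlastA : ∀ (l : List ℕ) (m : ℕ), (l ++ [m]).getLast? = some m := by
    intro l m
    rw [List.getLast?_append_of_ne_nil _ (by simp : ([m] : List ℕ) ≠ [])]
    rfl
  have hC : ∀ n, 1 ≤ n → List.Chain' P (C n) ∧ (C n).head? = some n ∧
      (C n).getLast? = some n := by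
    intro n hn
    induction n, hn using Nat.le_induction with
    | base => refine ⟨?_, by simp [hC1], by simp [hC1]⟩
              rw [hC1]; simp [hP, List.Chain', List.isChain_cons_cons]
    | succ n hn ih =>
      obtain ⟨ihc, ihh, ihl⟩ := ih
      have hrec := hCrec (n + 1) (by omega)
      simp only [Nat.add_sub_cancel] at hrec
      rw [hrec]
      have hCne : C n ≠ [] := by
        intro h; rw [h] at ihh; simp at ihh
      have hedge : ∀ x ∈ (C n).getLast?, ∀ y ∈ ([n+1] : List ℕ).head?, P x y := by
        intro x hx y hy
        rw [ihl] at hx; simp at hx hy; subst hx; subst hy; exact (hadj n).1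
      have hedge' : ∀ x ∈ (some (n+1) : Option ℕ), ∀ y ∈ (C n).head?, P x y := by
        intro x hx y hy
        rw [ihh] at hy; simp at hx hy; subst hx; subst hy; exact (hadj n).2
      refine ⟨?_, by simp, ?_⟩
      · rw [List.Chain', List.isChain_append, List.isChain_append, List.isChain_append,
          List.isChain_append]
        refine ⟨⟨⟨⟨by simp, ihc, fun x hx => hedge' x (by simpa using hx)⟩,
            by simp, ?_⟩, ihc, ?_⟩, by simp, ?_⟩
        · rw [List.getLast?_append_of_ne_nil _ hCne]
          exact hedge
        · rw [hlastA]
          exact hedge'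
        · rw [List.getLast?_append_of_ne_nil _ hCne]
          exact hedge
      · rw [hlastA]
  have hSl : ∀ n, 1 ≤ n → (S n).getLast? = some n := by
    intro n hn
    induction n, hn using Nat.le_induction with
    | base => simp [hS1]
    | succ n hn ih =>
      have hrec := hSrec (n + 1) (by omega)
      simp only [Nat.add_sub_cancel] at hrec
      have hCne : C (n + 1) ≠ [] := by
        intro h
        have := (hC (n + 1) (by omega)).2.1
        rw [h] at this; simp at this
      rw [hrec, List.getLast?_append_of_ne_nil _ hCne]
      exact (hC (n + 1) (by omega)).2.2
  have hSchain : ∀ n, 1 ≤ n → List.Chain' P (S n) := by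
    intro n hn
    induction n, hn using Nat.le_induction with
    | base => rw [hS1]; simp [hP, List.Chain', List.isChain_cons_cons]
    | succ n hn ih =>
      have hrec := hSrec (n + 1) (by omega)
      simp only [Nat.add_sub_cancel] at hrec
      rw [hrec, List.Chain', List.isChain_append]
      refine ⟨ih, (hC (n + 1) (by omega)).1, ?_⟩
      intro x hx y hy
      rw [hSl n hn] at hx
      rw [(hC (n + 1) (by omega)).2.1] at hy
      simp at hx hy; subst hx; subst hy; exact (hadj n).1
  intro n hn
  have h := hSchain n hn
  have e : (Bind.bind (S n) fun a => (Pure.pure ((a : ℤ)) : List ℤ)) =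
      List.map (fun a : ℕ => (a : ℤ)) (S n) := by
    induction S n with
    | nil => rfl
    | cons a t ih =>
      simp only [List.bind_eq_flatMap, List.flatMap_cons, List.map_cons] at ih ⊢
      rw [ih]; rfl
  show List.Chain' (fun a b : ℤ => |a - b| ≤ 1)
      (Bind.bind (S n) fun a => (Pure.pure ((a : ℤ)) : List ℤ))
  rw [e, List.Chain', List.isChain_map]
  simpa [hP, List.Chain'] using h
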